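/- A graded poset P of odd rank in which every proper interval [x,y] with (x,y) \neq (\hat{0},\hat{1}) is Eulerian is itself Eulerian. -/

import Mathlib

open Finset IncidenceAlgebra in
private lemma key_aux (n : ℕ) (P : Type*) [Fintype P] [PartialOrder P] [BoundedOrder P]
    [DecidableEq P] [@DecidableRel P P (· < ·)] [@DecidableRel P P (· ≤ ·)]
    [LocallyFiniteOrder P] (ρ : P → ℕ)
    (hbot : ρ ⊥ = 0) (htop : ρ ⊤ = n + 1)
    (hstrict : ∀ x y : P, x < y → ρ x < ρ y)
    (hodd : Odd (n + 1))
    (hproper : ∀ x y : P, x ≤ y → ¬(x = ⊥ ∧ y = ⊤) → mu ℤ x y = (-1) ^ (ρ y - ρ x)) :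
    ∀ x y : P, x ≤ y → mu ℤ x y = (-1) ^ (ρ y - ρ x) := by
  intro x y hxy
  by_cases h : x = ⊥ ∧ y = ⊤
  · obtain ⟨rfl, rfl⟩ := h
    have hne : (⊥ : P) ≠ ⊤ := by
      intro e
      rw [e, htop] at hbot
      exact (Nat.succ_ne_zero n) hbot
    have hrank : ∀ z : P, ρ z ≤ n + 1 := by
      intro z
      rcases eq_or_lt_of_le (le_top (a := z)) with rfl | hz
      · exact htop.le
      · exact (htop ▸ (hstrict z ⊤ hz)).le
    set S : ℤ := ∑ z : P, (-1 : ℤ) ^ (ρ z) with hS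
    have hIco : Ico (⊥ : P) ⊤ = univ.erase ⊤ := by
      ext z; simp [lt_top_iff_ne_top]
    have hIoc : Ioc (⊥ : P) ⊤ = univ.erase ⊥ := by
      ext z; simp [bot_lt_iff_ne_bot]
    have h1 : mu ℤ (⊥ : P) ⊤ = -(S + 1) := by
      rw [mu_eq_neg_sum_Ico_of_ne hne, hIco]
      have : ∑ z ∈ univ.erase ⊤, mu ℤ (⊥ : P) z
          = ∑ z ∈ univ.erase ⊤, (-1 : ℤ) ^ (ρ z) := by
        refine Finset.sum_congr rfl fun z hz => ?_
        have hz' : z ≠ ⊤ := (Finset.mem_erase.1 hz).1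
        rw [hproper ⊥ z bot_le (fun hc => hz' hc.2), hbot, Nat.sub_zero]
      rw [this, Finset.sum_erase_eq_sub (Finset.mem_univ _), htop,
        Odd.neg_one_pow hodd, ← hS]
      ring
    have h2 : mu ℤ (⊥ : P) ⊤ = S - 1 := by
      rw [mu_eq_neg_sum_Ioc_of_ne hne, hIoc]
      have : ∑ z ∈ univ.erase ⊥, mu ℤ z (⊤ : P)
          = ∑ z ∈ univ.erase ⊥, -(-1 : ℤ) ^ (ρ z) := by
        refine Finset.sum_congr rfl fun z hz => ?_
        have hz' : z ≠ ⊥ := (Finset.mem_erase.1 hz).1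
        rw [hproper z ⊤ le_top (fun hc => hz' hc.1), htop]
        have hmul : (-1 : ℤ) ^ (n + 1 - ρ z) * (-1) ^ (ρ z) = (-1) ^ (n + 1) := by
          rw [← pow_add, Nat.sub_add_cancel (hrank z)]
        have hpow : ((-1 : ℤ) ^ (ρ z)) * ((-1) ^ (ρ z)) = 1 := by
          rw [← pow_add, Even.neg_one_pow ⟨ρ z, by ring⟩]
        calc (-1 : ℤ) ^ (n + 1 - ρ z)
            = (-1 : ℤ) ^ (n + 1 - ρ z) * (((-1 : ℤ) ^ (ρ z)) * ((-1) ^ (ρ z))) := by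
              rw [hpow, mul_one]
          _ = ((-1 : ℤ) ^ (n + 1)) * (-1) ^ (ρ z) := by rw [← mul_assoc, hmul]
          _ = -(-1 : ℤ) ^ (ρ z) := by rw [Odd.neg_one_pow hodd]; ring
      rw [this, Finset.sum_neg_distrib, Finset.sum_erase_eq_sub (Finset.mem_univ _),
        hbot, pow_zero, ← hS]
      ring
    have hS0 : S = 0 := by linarith [h1.symm.trans h2]
    rw [h2, hS0, hbot, htop, Nat.sub_zero, Odd.neg_one_pow hodd]
    ring
  · exact hproper x y hxy h

/-- The Möbius function of a finite poset. -/
noncomputable def muP (P : Type*) [PartialOrder P] [Fintype P] (x y : P) : ℤ :=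
  letI := Classical.decEq P
  letI : @DecidableRel P P (· < ·) := Classical.decRel _
  letI : @DecidableRel P P (· ≤ ·) := Classical.decRel _
  letI := Fintype.toLocallyFiniteOrder (α := P)
  IncidenceAlgebra.mu ℤ x y

/-- A graded poset of odd rank in which every proper interval `[x,y]` with
`(x,y) ≠ (0̂,1̂)` is Eulerian is itself Eulerian. -/
theorem eulerian_of_proper_intervals_eulerian (n : ℕ) (P : Type*) [Fintype P]
    [PartialOrder P] [BoundedOrder P] (ρ : P → ℕ)
    (hbot : ρ ⊥ = 0) (htop : ρ ⊤ = n + 1)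
    (hstrict : ∀ x y : P, x < y → ρ x < ρ y)
    (hcov : ∀ x y : P, x ⋖ y → ρ y = ρ x + 1)
    (hodd : Odd (n + 1))
    (hproper : ∀ x y : P, x ≤ y → ¬(x = ⊥ ∧ y = ⊤) → muP P x y = (-1) ^ (ρ y - ρ x)) :
    ∀ x y : P, x ≤ y → muP P x y = (-1) ^ (ρ y - ρ x) := by
  letI := Classical.decEq P
  letI : @DecidableRel P P (· < ·) := Classical.decRel _
  letI : @DecidableRel P P (· ≤ ·) := Classical.decRel _
  letI := Fintype.toLocallyFiniteOrder (α := P)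
  simp only [muP] at hproper ⊢
  exact key_aux n P ρ hbot htop hstrict hodd hproper
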